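/- For a permutation s of {1,…,n+1}, define r(s) = ((a₁,…,a_k),(b₁,…,b_k)) where a₁ < … < a_k is the ordered list of all indices i with s(i) > i, and b_t = s(a_t). Then the map s ↦ r(s) is a bijection between 321-avoiding permutations of {1,…,n+1} and the set II_n of pairs of integer sequences (a₁ < a₂ < … < a_k, b₁ < b₂ < … < b_k) with 0 ≤ k ≤ n, 1 ≤ a_t, b_k ≤ n+1, and a_t < b_t for all t. -/

import Mathlib

/-- A permutation is 321-avoiding if no three indices `i < j < k` are completely reversed. -/
def Avoids321 {m : ℕ} (s : Equiv.Perm (Fin m)) : Prop :=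
  ¬ ∃ i j k : Fin m, i < j ∧ j < k ∧ s k < s j ∧ s j < s i

/-- `IIn n` : increasing couples of increasing integer sequences bounded by `1` and `n+1`:
pairs of strictly increasing lists `(a₁ < … < a_k, b₁ < … < b_k)` of equal length `k ≤ n`,
with `1 ≤ aₜ`, all `bₜ ≤ n+1`, and `aₜ < bₜ` componentwise. -/
def IIn (n : ℕ) : Set (List ℕ × List ℕ) :=
  {p | p.1.length = p.2.length ∧ p.1.length ≤ n ∧
    p.1.Chain' (· < ·) ∧ p.2.Chain' (· < ·) ∧
    (∀ x ∈ p.1, 1 ≤ x) ∧ (∀ y ∈ p.2, y ≤ n + 1) ∧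
    ∀ (t : ℕ) (h1 : t < p.1.length) (h2 : t < p.2.length), p.1[t] < p.2[t]}

/-- The ordered list of excedances of a permutation of `{1, …, n+1}`
(indices `i` with `i < s i`), encoded as elements of `{1, …, n+1}`. -/
def excedanceList {n : ℕ} (s : Equiv.Perm (Fin (n + 1))) : List (Fin (n + 1)) :=
  (List.finRange (n + 1)).filter (fun i => decide (i < s i))

/-- The right sequence couple `r(s) = ((a₁,…,a_k), (b₁,…,b_k))` of a permutation:
`(aₜ)` is the ordered list of excedances, and `bₜ = s(aₜ)`, written in `{1, …, n+1}`. -/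
def rightCouple {n : ℕ} (s : Equiv.Perm (Fin (n + 1))) : List ℕ × List ℕ :=
  ((excedanceList s).map (fun i => (i : ℕ) + 1),
   (excedanceList s).map (fun i => ((s i : Fin (n + 1)) : ℕ) + 1))

open Finset

namespace Stmt9Aux

variable {m : ℕ}

lemma exists_ge_of_card_filter {N : ℕ} (p : Fin N → Prop) [DecidablePred p] {j : Fin N}
    (h : (j : ℕ) + 1 ≤ (Finset.univ.filter p).card) : ∃ i, j ≤ i ∧ p i := by
  by_contra hc
  push_neg at hc
  have hsub : Finset.univ.filter p ⊆ Finset.Iio j := by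
    intro i hi
    simp only [mem_filter] at hi
    simp only [Finset.mem_Iio]
    by_contra hij
    exact absurd hi.2 (hc i (le_of_not_gt hij))
  have := Finset.card_le_card hsub
  rw [Fin.card_Iio] at this
  omega

lemma inter_Iic_eq_image (B : Finset (Fin m)) {k : ℕ} (hB : B.card = k) (x : Fin m) :
    B ∩ Finset.Iic x =
      (Finset.univ.filter fun i : Fin k => B.orderEmbOfFin hB i ≤ x).image (B.orderEmbOfFin hB) := by
  ext b
  simp only [mem_inter, Finset.mem_Iic, mem_image, mem_filter, mem_univ, true_and]
  constructor
  · rintro ⟨hbB, hbx⟩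
    have : b ∈ Set.range (B.orderEmbOfFin hB) := by
      rw [Finset.range_orderEmbOfFin]; exact hbB
    obtain ⟨i, rfl⟩ := this
    exact ⟨i, hbx, rfl⟩
  · rintro ⟨i, hix, rfl⟩
    exact ⟨Finset.orderEmbOfFin_mem _ _ _, hix⟩

lemma card_inter_Iic (B : Finset (Fin m)) {k : ℕ} (hB : B.card = k) (x : Fin m) :
    (B ∩ Finset.Iic x).card =
      (Finset.univ.filter fun i : Fin k => B.orderEmbOfFin hB i ≤ x).card := by
  rw [inter_Iic_eq_image B hB x, Finset.card_image_of_injective _ (B.orderEmbOfFin hB).injective]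


-- main counting: #(B ∩ Iic x) ≤ #(E ∩ Iic x)
lemma card_B_le_card_E {E B : Finset (Fin m)} {k : ℕ} (hE : E.card = k) (hB : B.card = k)
    (hlt : ∀ i : Fin k, E.orderEmbOfFin hE i < B.orderEmbOfFin hB i) (x : Fin m) :
    (B ∩ Finset.Iic x).card ≤ (E ∩ Finset.Iic x).card := by
  rw [card_inter_Iic B hB x, card_inter_Iic E hE x]
  apply Finset.card_le_card
  intro i hi
  simp only [mem_filter, mem_univ, true_and] at hi ⊢
  exact le_of_lt (lt_of_lt_of_le (hlt i) hi)

-- complements: #(Bᶜ ∩ Iic x) ≥ #(Eᶜ ∩ Iic x)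
lemma card_Ec_le_card_Bc {E B : Finset (Fin m)} {k : ℕ} (hE : E.card = k) (hB : B.card = k)
    (hlt : ∀ i : Fin k, E.orderEmbOfFin hE i < B.orderEmbOfFin hB i) (x : Fin m) :
    (Eᶜ ∩ Finset.Iic x).card ≤ (Bᶜ ∩ Finset.Iic x).card := by
  have h1 : ∀ S : Finset (Fin m), (Sᶜ ∩ Finset.Iic x).card = (x : ℕ) + 1 - (S ∩ Finset.Iic x).card := by
    intro S
    have hdis : Disjoint (S ∩ Finset.Iic x) (Sᶜ ∩ Finset.Iic x) := by
      apply Finset.disjoint_left.2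
      intro a ha hb
      simp only [mem_inter, mem_compl] at ha hb
      exact hb.1 ha.1
    have hun : (S ∩ Finset.Iic x) ∪ (Sᶜ ∩ Finset.Iic x) = Finset.Iic x := by
      rw [← Finset.union_inter_distrib_right, Finset.union_compl, Finset.univ_inter]
    have := Finset.card_union_of_disjoint hdis
    rw [hun, Fin.card_Iic] at this
    have hle : (S ∩ Finset.Iic x).card ≤ (x:ℕ) + 1 := by
      have := Finset.card_le_card (Finset.inter_subset_right (s₁ := S) (s₂ := Finset.Iic x))
      rwa [Fin.card_Iic] at this
    omega
  rw [h1 E, h1 B]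
  have := card_B_le_card_E hE hB hlt x
  omega

lemma emb_compl_le {E B : Finset (Fin m)} {k : ℕ} (hE : E.card = k) (hB : B.card = k)
    (hlt : ∀ i : Fin k, E.orderEmbOfFin hE i < B.orderEmbOfFin hB i)
    (hEc : Eᶜ.card = m - k) (hBc : Bᶜ.card = m - k) (j : Fin (m - k)) :
    Bᶜ.orderEmbOfFin hBc j ≤ Eᶜ.orderEmbOfFin hEc j := by
  set x := Eᶜ.orderEmbOfFin hEc j with hx
  -- #(Eᶜ ∩ Iic x) ≥ j+1
  have h1 : (j : ℕ) + 1 ≤ (Eᶜ ∩ Finset.Iic x).card := by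
    rw [card_inter_Iic Eᶜ hEc x]
    have hsub : (Finset.Iic j) ⊆ Finset.univ.filter fun i : Fin (m-k) => Eᶜ.orderEmbOfFin hEc i ≤ x := by
      intro i hi
      simp only [mem_filter, mem_univ, true_and]
      exact (Eᶜ.orderEmbOfFin hEc).monotone (Finset.mem_Iic.1 hi)
    have := Finset.card_le_card hsub
    rwa [Fin.card_Iic] at this
  have h2 : (j : ℕ) + 1 ≤ (Finset.univ.filter fun i : Fin (m-k) => Bᶜ.orderEmbOfFin hBc i ≤ x).card := by
    rw [← card_inter_Iic Bᶜ hBc x]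
    exact le_trans h1 (card_Ec_le_card_Bc hE hB hlt x)
  obtain ⟨i, hji, hix⟩ := exists_ge_of_card_filter _ h2
  exact le_trans ((Bᶜ.orderEmbOfFin hBc).monotone hji) hix

section Build
variable (E B : Finset (Fin m)) {k : ℕ} (hE : E.card = k) (hB : B.card = k)
  (hEc : Eᶜ.card = m - k) (hBc : Bᶜ.card = m - k)

def buildFun : Fin m → Fin m := fun x =>
  if h : x ∈ E then B.orderEmbOfFin hB ((E.orderIsoOfFin hE).symm ⟨x, h⟩)
  else Bᶜ.orderEmbOfFin hBc ((Eᶜ.orderIsoOfFin hEc).symm ⟨x, Finset.mem_compl.2 h⟩)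

lemma buildFun_mem {x : Fin m} (h : x ∈ E) : buildFun E B hE hB hEc hBc x ∈ B := by
  rw [buildFun, dif_pos h]; exact Finset.orderEmbOfFin_mem _ _ _

lemma buildFun_not_mem {x : Fin m} (h : x ∉ E) : buildFun E B hE hB hEc hBc x ∈ Bᶜ := by
  rw [buildFun, dif_neg h]; exact Finset.orderEmbOfFin_mem _ _ _

lemma coe_iso (S : Finset (Fin m)) {r : ℕ} (hS : S.card = r) (u : {x // x ∈ S}) (h : (u : Fin m) ∈ S) :
    (⟨(u : Fin m), h⟩ : {x // x ∈ S}) = u := Subtype.ext rfl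

lemma buildFun_bij : Function.Bijective (buildFun E B hE hB hEc hBc) := by
  constructor
  · intro x y hxy
    by_cases hx : x ∈ E <;> by_cases hy : y ∈ E
    · simp only [buildFun, dif_pos hx, dif_pos hy] at hxy
      have := (E.orderIsoOfFin hE).symm.injective ((B.orderEmbOfFin hB).injective hxy)
      exact Subtype.ext_iff.1 this
    · exact absurd (hxy ▸ buildFun_mem E B hE hB hEc hBc hx)
        (Finset.mem_compl.1 (buildFun_not_mem E B hE hB hEc hBc hy))
    · exact absurd (hxy.symm ▸ buildFun_mem E B hE hB hEc hBc hy)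
        (Finset.mem_compl.1 (buildFun_not_mem E B hE hB hEc hBc hx))
    · simp only [buildFun, dif_neg hx, dif_neg hy] at hxy
      have := (Eᶜ.orderIsoOfFin hEc).symm.injective ((Bᶜ.orderEmbOfFin hBc).injective hxy)
      exact Subtype.ext_iff.1 this
  · intro y
    by_cases hy : y ∈ B
    · set u := (B.orderIsoOfFin hB).symm ⟨y, hy⟩ with hu
      refine ⟨(E.orderIsoOfFin hE u : Fin m), ?_⟩
      rw [buildFun, dif_pos (E.orderIsoOfFin hE u).2, coe_iso E hE, OrderIso.symm_apply_apply,
        ← Finset.coe_orderIsoOfFin_apply, hu, OrderIso.apply_symm_apply]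
    · set u := (Bᶜ.orderIsoOfFin hBc).symm ⟨y, Finset.mem_compl.2 hy⟩ with hu
      refine ⟨(Eᶜ.orderIsoOfFin hEc u : Fin m), ?_⟩
      have hmem : ((Eᶜ.orderIsoOfFin hEc u : Fin m)) ∈ Eᶜ := (Eᶜ.orderIsoOfFin hEc u).2
      rw [buildFun, dif_neg (Finset.mem_compl.1 hmem), coe_iso Eᶜ hEc, OrderIso.symm_apply_apply,
        ← Finset.coe_orderIsoOfFin_apply, hu, OrderIso.apply_symm_apply]

noncomputable def buildPerm : Equiv.Perm (Fin m) :=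
  Equiv.ofBijective _ (buildFun_bij E B hE hB hEc hBc)

lemma buildPerm_emb (i : Fin k) :
    buildPerm E B hE hB hEc hBc (E.orderEmbOfFin hE i) = B.orderEmbOfFin hB i := by
  have hmem : E.orderEmbOfFin hE i ∈ E := Finset.orderEmbOfFin_mem _ _ _
  show buildFun E B hE hB hEc hBc _ = _
  rw [buildFun, dif_pos hmem]
  congr 1
  have : (⟨E.orderEmbOfFin hE i, hmem⟩ : {x // x ∈ E}) = E.orderIsoOfFin hE i :=
    Subtype.ext (Finset.coe_orderIsoOfFin_apply E hE i).symm
  rw [this, OrderIso.symm_apply_apply]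

lemma buildPerm_embc (j : Fin (m - k)) :
    buildPerm E B hE hB hEc hBc (Eᶜ.orderEmbOfFin hEc j) = Bᶜ.orderEmbOfFin hBc j := by
  have hmem : Eᶜ.orderEmbOfFin hEc j ∈ Eᶜ := Finset.orderEmbOfFin_mem _ _ _
  show buildFun E B hE hB hEc hBc _ = _
  rw [buildFun, dif_neg (Finset.mem_compl.1 hmem)]
  congr 1
  have : (⟨Eᶜ.orderEmbOfFin hEc j, hmem⟩ : {x // x ∈ Eᶜ}) = Eᶜ.orderIsoOfFin hEc j :=
    Subtype.ext (Finset.coe_orderIsoOfFin_apply Eᶜ hEc j).symm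
  rw [this, OrderIso.symm_apply_apply]

end Build


lemma avoids_of_incr (s : Equiv.Perm (Fin m))
    (hA : ∀ i j : Fin m, i < j → i < s i → j < s j → s i < s j)
    (hB : ∀ i j : Fin m, i < j → ¬ i < s i → ¬ j < s j → s i < s j) : Avoids321 s := by
  rintro ⟨i, j, k, h1, h2, h3, h4⟩
  by_cases hi : i < s i <;> by_cases hj : j < s j <;> by_cases hk : k < s k
  · exact absurd (hA i j h1 hi hj) (asymm h4)
  · exact absurd (hA i j h1 hi hj) (asymm h4)
  · exact absurd (hA i k (h1.trans h2) hi hk) (asymm (h3.trans h4))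
  · exact absurd (hB j k h2 hj hk) (asymm h3)
  · exact absurd (hA j k h2 hj hk) (asymm h3)
  · exact absurd (hB i k (h1.trans h2) hi hk) (asymm (h3.trans h4))
  · exact absurd (hB i j h1 hi hj) (asymm h4)
  · exact absurd (hB i j h1 hi hj) (asymm h4)

lemma card_lt_val (s : Equiv.Perm (Fin m)) (y : Fin m) :
    (Finset.univ.filter fun x => s x < y).card = (y : ℕ) := by
  have himg : (Finset.univ.filter fun x => s x < y).image s = Finset.Iio y := by
    ext z
    simp only [mem_image, mem_filter, mem_univ, true_and, Finset.mem_Iio]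
    constructor
    · rintro ⟨x, hx, rfl⟩; exact hx
    · intro hz; exact ⟨s.symm z, by simpa using hz, by simp⟩
  have := Finset.card_image_of_injective (Finset.univ.filter fun x => s x < y) s.injective
  rw [himg, Fin.card_Iio] at this
  omega

lemma card_gt_val (s : Equiv.Perm (Fin m)) (y : Fin m) :
    (Finset.univ.filter fun x => y < s x).card = m - 1 - (y : ℕ) := by
  have himg : (Finset.univ.filter fun x => y < s x).image s = Finset.Ioi y := by
    ext z
    simp only [mem_image, mem_filter, mem_univ, true_and, Finset.mem_Ioi]
    constructor
    · rintro ⟨x, hx, rfl⟩; exact hx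
    · intro hz; exact ⟨s.symm z, by simpa using hz, by simp⟩
  have := Finset.card_image_of_injective (Finset.univ.filter fun x => y < s x) s.injective
  rw [himg] at this
  have hcard : (Finset.Ioi y).card = m - 1 - (y : ℕ) := by
    rw [Fin.card_Ioi]  -- check name
  omega


variable {s : Equiv.Perm (Fin m)}

lemma lemA (hav : Avoids321 s) {i j : Fin m} (hij : i < j) (hj : j < s j) :
    s i < s j := by
  by_contra hcon
  have hji : s j < s i := lt_of_le_of_ne (not_lt.1 hcon) (fun h => (ne_of_lt hij) (s.injective h.symm))
  set T := Finset.univ.filter (fun x => s x < s j) with hT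
  have hcard : T.card = ((s j : Fin m) : ℕ) := _root_.Stmt9Aux.card_lt_val s (s j)
  have hex : ∃ kk ∈ T, j < kk := by
    by_contra hc
    push_neg at hc
    have hsub : T ⊆ Finset.Iic j \ {i, j} := by
      intro x hx
      simp only [Finset.mem_sdiff, Finset.mem_Iic, Finset.mem_insert, Finset.mem_singleton]
      refine ⟨hc x hx, ?_⟩
      rintro (rfl | rfl)
      · simp only [hT, mem_filter] at hx; exact absurd hx.2 (asymm hji)
      · simp only [hT, mem_filter] at hx; exact absurd hx.2 (lt_irrefl _)
    have hsub2 : ({i, j} : Finset (Fin m)) ⊆ Finset.Iic j := by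
      intro x hx; simp only [Finset.mem_insert, Finset.mem_singleton] at hx
      rcases hx with rfl | rfl
      · exact Finset.mem_Iic.2 (le_of_lt hij)
      · exact Finset.mem_Iic.2 le_rfl
    have h2 := Finset.card_le_card hsub
    rw [Finset.card_sdiff_of_subset hsub2, Fin.card_Iic,
      Finset.card_insert_of_notMem (by simp [ne_of_lt hij]), Finset.card_singleton] at h2
    have h3 : (j : ℕ) < ((s j : Fin m) : ℕ) := hj
    omega
  obtain ⟨kk, hkkT, hjk⟩ := hex
  simp only [hT, mem_filter] at hkkT
  exact hav ⟨i, j, kk, hij, hjk, hkkT.2, hji⟩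

lemma lemB (hav : Avoids321 s) {i j : Fin m} (hij : i < j) (hi : ¬ i < s i) (hj : ¬ j < s j) :
    s i < s j := by
  by_contra hcon
  have hji : s j < s i := lt_of_le_of_ne (not_lt.1 hcon) (fun h => (ne_of_lt hij) (s.injective h.symm))
  set T := Finset.univ.filter (fun x => s i < s x) with hT
  have hcard : T.card = m - 1 - ((s i : Fin m) : ℕ) := _root_.Stmt9Aux.card_gt_val s (s i)
  have hex : ∃ kk ∈ T, kk < i := by
    by_contra hc
    push_neg at hc
    have hsub : T ⊆ Finset.Ici i \ {i, j} := by
      intro x hx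
      simp only [Finset.mem_sdiff, Finset.mem_Ici, Finset.mem_insert, Finset.mem_singleton]
      refine ⟨hc x hx, ?_⟩
      rintro (rfl | rfl)
      · simp only [hT, mem_filter] at hx; exact absurd hx.2 (lt_irrefl _)
      · simp only [hT, mem_filter] at hx; exact absurd hx.2 (asymm hji)
    have hsub2 : ({i, j} : Finset (Fin m)) ⊆ Finset.Ici i := by
      intro x hx; simp only [Finset.mem_insert, Finset.mem_singleton] at hx
      rcases hx with rfl | rfl
      · exact Finset.mem_Ici.2 le_rfl
      · exact Finset.mem_Ici.2 (le_of_lt hij)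
    have h2 := Finset.card_le_card hsub
    rw [Finset.card_sdiff_of_subset hsub2, Fin.card_Ici,
      Finset.card_insert_of_notMem (by simp [ne_of_lt hij]), Finset.card_singleton] at h2
    have h3 : ((s i : Fin m) : ℕ) ≤ (i : ℕ) := not_lt.1 hi
    have h4 : (i : ℕ) < (j : ℕ) := hij
    have h5 : (j : ℕ) < m := j.isLt
    omega
  obtain ⟨kk, hkkT, hki⟩ := hex
  simp only [hT, mem_filter] at hkkT
  exact hav ⟨kk, i, j, hki, hij, hji, hkkT.2⟩

section Exc
variable {n : ℕ} (s : Equiv.Perm (Fin (n + 1)))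

def exS : Finset (Fin (n + 1)) := Finset.univ.filter fun i => i < s i

lemma mem_exS {i : Fin (n+1)} : i ∈ exS s ↔ i < s i := by simp [exS]

lemma mem_excedanceList {i : Fin (n+1)} : i ∈ excedanceList s ↔ i < s i := by
  simp [excedanceList, List.mem_filter, List.mem_finRange]

lemma excedanceList_sorted : List.Pairwise (· < ·) (excedanceList s) :=
  (List.pairwise_lt_finRange (n+1)).sublist List.filter_sublist

lemma excedanceList_nodup : (excedanceList s).Nodup :=
  (List.nodup_finRange (n+1)).sublist List.filter_sublist

lemma excedanceList_toFinset : (excedanceList s).toFinset = exS s := by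
  ext i
  simp [List.mem_toFinset, mem_excedanceList, exS]

lemma excedanceList_eq_sort : excedanceList s = (exS s).sort (· ≤ ·) := by
  rw [← excedanceList_toFinset s]
  exact ((List.toFinset_sort (· ≤ ·) (excedanceList_nodup s)).2
    ((excedanceList_sorted s).imp le_of_lt)).symm

lemma exS_card : (exS s).card = (excedanceList s).length := by
  rw [← excedanceList_toFinset s, List.toFinset_card_of_nodup (excedanceList_nodup s)]

lemma excedanceList_getElem (t : ℕ) (ht : t < (excedanceList s).length) :
    (excedanceList s)[t] = (exS s).orderEmbOfFin (exS_card s) ⟨t, ht⟩ := by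
  simp only [Finset.orderEmbOfFin_apply, Fin.getElem_fin]
  exact List.getElem_of_eq (excedanceList_eq_sort s) ht

lemma excedanceList_length_le : (excedanceList s).length ≤ n := by
  rw [← exS_card]
  have hsub : exS s ⊆ Finset.univ.erase (Fin.last n) := by
    intro i hi
    simp only [exS, mem_filter, mem_univ, true_and] at hi
    refine Finset.mem_erase.2 ⟨?_, Finset.mem_univ _⟩
    intro he
    subst he
    exact absurd (Fin.le_last (s (Fin.last n))) (not_le.2 hi)
  have := Finset.card_le_card hsub
  rwa [Finset.card_erase_of_mem (Finset.mem_univ _), Finset.card_univ, Fintype.card_fin,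
    Nat.add_sub_cancel] at this

lemma mapsTo (hav : Avoids321 s) : rightCouple s ∈ IIn n := by
  have e1 : (rightCouple s).1 = (excedanceList s).map (fun i : Fin (n+1) => (i : ℕ) + 1) := by
    rw [rightCouple]
    simp only [List.pure_def, List.bind_eq_flatMap, List.map_flatMap, List.map_cons,
      List.map_nil, ← List.map_eq_flatMap, List.map_map]
    rfl
  have e2 : (rightCouple s).2 = (excedanceList s).map (fun i => ((s i : Fin (n+1)) : ℕ) + 1) := rfl
  refine ⟨?_, ?_, ?_, ?_, ?_, ?_, ?_⟩
  · rw [e1, e2, List.length_map, List.length_map]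
  · rw [e1, List.length_map]
    exact excedanceList_length_le s
  · rw [e1]; unfold List.Chain'; rw [List.isChain_iff_pairwise, List.pairwise_map]
    exact (excedanceList_sorted s).imp (fun h => Nat.add_lt_add_right h 1)
  · rw [e2]; unfold List.Chain'; rw [List.isChain_iff_pairwise, List.pairwise_map]
    refine ((excedanceList_sorted s).imp_of_mem ?_)
    intro a b ha hb hab
    exact Nat.add_lt_add_right (lemA hav hab ((mem_excedanceList s).1 hb)) 1
  · intro x hx
    rw [e1] at hx
    simp only [List.mem_map] at hx
    obtain ⟨i, _, rfl⟩ := hx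
    omega
  · intro y hy
    rw [e2] at hy
    simp only [List.mem_map] at hy
    obtain ⟨i, _, rfl⟩ := hy
    have := (s i).isLt
    omega
  · intro t h1 h2
    have h1' : t < (excedanceList s).length := by rw [e1, List.length_map] at h1; exact h1
    have hmem : (excedanceList s)[t] ∈ excedanceList s := List.getElem_mem h1'
    have hlt := (mem_excedanceList s).1 hmem
    have g1 : (rightCouple s).1[t]'h1 = ((excedanceList s)[t] : ℕ) + 1 := by
      simp only [e1, List.getElem_map]
    have g2 : (rightCouple s).2[t]'h2 = ((s (excedanceList s)[t] : Fin (n+1)) : ℕ) + 1 := by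
      simp only [e2, List.getElem_map]
    rw [g1, g2]
    exact Nat.add_lt_add_right hlt 1

end Exc

section Inj
variable {n : ℕ}

lemma injOn_aux {s t : Equiv.Perm (Fin (n+1))} (havs : Avoids321 s) (havt : Avoids321 t)
    (h : rightCouple s = rightCouple t) : s = t := by
  rw [rightCouple, rightCouple, Prod.mk.injEq] at h
  obtain ⟨hfst, hsnd⟩ := h
  simp only [List.pure_def, List.bind_eq_flatMap, List.map_flatMap, List.map_cons,
    List.map_nil, ← List.map_eq_flatMap, List.map_map] at hfst
  have h1 : excedanceList s = excedanceList t :=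
    List.map_injective_iff.2 (fun a b hab => Fin.ext (Nat.add_right_cancel hab)) hfst
  have h2 : ∀ i ∈ excedanceList s, s i = t i := by
    rw [← h1] at hsnd
    intro i hi
    have := List.map_inj_left.1 hsnd i hi
    exact Fin.ext (Nat.add_right_cancel this)
  have hset : exS s = exS t := by
    rw [← excedanceList_toFinset, ← excedanceList_toFinset, h1]
  -- the common excedance finset
  set E := exS s with hE
  set k := E.card with hk
  have hEc : Eᶜ.card = (n+1) - k := by
    rw [Finset.card_compl, Fintype.card_fin]
  -- image finsets
  have hsE : ∀ x ∈ E, s x = t x := fun x hx =>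
    h2 x ((mem_excedanceList s).2 ((mem_exS s).1 hx))
  have himg : E.image s = E.image t := Finset.image_congr (fun x hx => hsE x hx)
  set Bc := (E.image s)ᶜ with hBc
  have hBcc : Bc.card = (n+1) - k := by
    rw [hBc, Finset.card_compl, Fintype.card_fin,
      Finset.card_image_of_injective _ s.injective]
  have key : ∀ (u : Equiv.Perm (Fin (n+1))), Avoids321 u → exS u = E → E.image u = E.image s →
      (fun j : Fin ((n+1) - k) => u (Eᶜ.orderEmbOfFin hEc j)) = Bc.orderEmbOfFin hBcc := by
    intro u hav huE huimg
    have hmemE : ∀ z, z ∈ exS u ↔ z ∈ E := fun z => by rw [huE]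
    apply Finset.orderEmbOfFin_unique
    · intro j
      have hmem : Eᶜ.orderEmbOfFin hEc j ∈ Eᶜ := Finset.orderEmbOfFin_mem _ _ _
      rw [hBc, ← huimg, Finset.mem_compl]
      intro hcon
      obtain ⟨e, he, heq⟩ := Finset.mem_image.1 hcon
      exact absurd (u.injective heq ▸ he) (Finset.mem_compl.1 hmem)
    · intro a b hab
      have ha : Eᶜ.orderEmbOfFin hEc a ∈ Eᶜ := Finset.orderEmbOfFin_mem _ _ _
      have hb : Eᶜ.orderEmbOfFin hEc b ∈ Eᶜ := Finset.orderEmbOfFin_mem _ _ _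
      have hlt := (Eᶜ.orderEmbOfFin hEc).strictMono hab
      refine lemB hav hlt ?_ ?_
      · exact fun hc => (Finset.mem_compl.1 ha) ((hmemE _).1 ((mem_exS u).2 hc))
      · exact fun hc => (Finset.mem_compl.1 hb) ((hmemE _).1 ((mem_exS u).2 hc))
  have keys := key s havs rfl rfl
  have keyt := key t havt hset.symm himg.symm
  apply Equiv.ext
  intro x
  by_cases hx : x ∈ E
  · exact hsE x hx
  · have hxc : x ∈ Eᶜ := Finset.mem_compl.2 hx
    have : x ∈ Set.range (Eᶜ.orderEmbOfFin hEc) := by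
      rw [Finset.range_orderEmbOfFin]; exact_mod_cast hxc
    obtain ⟨j, rfl⟩ := this
    have := congrFun keys j
    rw [← congrFun keyt j] at this
    exact this

end Inj

lemma mem_emb {S : Finset (Fin m)} {r : ℕ} (hS : S.card = r) {x : Fin m} (h : x ∈ S) :
    ∃ i, S.orderEmbOfFin hS i = x := by
  have : x ∈ Set.range (S.orderEmbOfFin hS) := by
    rw [Finset.range_orderEmbOfFin]; exact_mod_cast h
  exact this

lemma sorted_toFinset_sort {l : List (Fin m)} (hs : List.Pairwise (· < ·) l) :
    l.toFinset.sort (· ≤ ·) = l :=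
  (List.toFinset_sort (· ≤ ·) (hs.imp ne_of_lt)).2 (hs.imp le_of_lt)

lemma sorted_card_toFinset {l : List (Fin m)} (hs : List.Pairwise (· < ·) l) :
    l.toFinset.card = l.length :=
  List.toFinset_card_of_nodup (hs.imp ne_of_lt)

lemma sorted_orderEmbOfFin {l : List (Fin m)} (hs : List.Pairwise (· < ·) l)
    {r : ℕ} (hcard : l.toFinset.card = r) (i : Fin r) :
    l.toFinset.orderEmbOfFin hcard i = l[(i : ℕ)]'(by
      rw [← sorted_card_toFinset hs, hcard]; exact i.isLt) := by
  simp only [Finset.orderEmbOfFin_apply, Fin.getElem_fin]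
  exact List.getElem_of_eq (sorted_toFinset_sort hs) _

lemma surj_aux {n : ℕ} (p : List ℕ × List ℕ) (hp : p ∈ IIn n) :
    ∃ s : Equiv.Perm (Fin (n+1)), Avoids321 s ∧ rightCouple s = p := by
  obtain ⟨A, Bl⟩ := p
  obtain ⟨hlen, hkn, hAc, hBc, hA1, hBub, hcomp⟩ := hp
  simp only at hlen hkn hAc hBc hA1 hBub hcomp
  set k := A.length with hk
  have hAp := List.pairwise_iff_getElem.1 (List.isChain_iff_pairwise.1 hAc)
  have hBp := List.pairwise_iff_getElem.1 (List.isChain_iff_pairwise.1 hBc)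
  have hA1' : ∀ (t : ℕ) (ht : t < A.length), 1 ≤ A[t] :=
    fun t ht => hA1 _ (List.getElem_mem ht)
  have hBub' : ∀ (t : ℕ) (ht : t < Bl.length), Bl[t] ≤ n + 1 :=
    fun t ht => hBub _ (List.getElem_mem ht)
  have hAmem : ∀ x ∈ A, x - 1 < n + 1 := by
    intro x hx
    obtain ⟨t, ht, rfl⟩ := List.mem_iff_getElem.1 hx
    have h1 := hcomp t ht (by omega)
    have h2 := hBub' t (by omega)
    omega
  have hBmem : ∀ y ∈ Bl, y - 1 < n + 1 := by
    intro y hy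
    obtain ⟨t, ht, rfl⟩ := List.mem_iff_getElem.1 hy
    have := hBub' t ht
    omega
  set FA : List (Fin (n+1)) := A.pmap (fun x h => (⟨x - 1, h⟩ : Fin (n+1))) hAmem with hFA
  set FB : List (Fin (n+1)) := Bl.pmap (fun x h => (⟨x - 1, h⟩ : Fin (n+1))) hBmem with hFB
  have hFAlen : FA.length = k := by rw [hFA, List.length_pmap]
  have hFBlen : FB.length = k := by rw [hFB, List.length_pmap]; omega
  have hFAget : ∀ (t : ℕ) (ht : t < FA.length), (FA[t] : ℕ) = A[t]'(by omega) - 1 := by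
    intro t ht
    simp only [hFA, List.getElem_pmap]
  have hFBget : ∀ (t : ℕ) (ht : t < FB.length), (FB[t] : ℕ) = Bl[t]'(by omega) - 1 := by
    intro t ht
    simp only [hFB, List.getElem_pmap]
  have hFAs : List.Pairwise (· < ·) FA := by
    apply List.pairwise_iff_getElem.2
    intro a b ha hb hab
    have h1 := hAp a b (by omega) (by omega) hab
    have h2 := hA1' a (by omega)
    rw [Fin.lt_def, hFAget a ha, hFAget b hb]
    omega
  have hFBs : List.Pairwise (· < ·) FB := by
    apply List.pairwise_iff_getElem.2
    intro a b ha hb hab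
    have h1 := hBp a b (by omega) (by omega) hab
    have h2 : 1 ≤ A[a]'(by omega) := hA1' a (by omega)
    have h3 := hcomp a (by omega) (by omega)
    rw [Fin.lt_def, hFBget a ha, hFBget b hb]
    omega
  set E : Finset (Fin (n+1)) := FA.toFinset with hEdef
  set Bf : Finset (Fin (n+1)) := FB.toFinset with hBfdef
  have hEcard : E.card = k := by rw [hEdef, sorted_card_toFinset hFAs, hFAlen]
  have hBcard : Bf.card = k := by rw [hBfdef, sorted_card_toFinset hFBs, hFBlen]
  have hEc : Eᶜ.card = (n+1) - k := by rw [Finset.card_compl, Fintype.card_fin, hEcard]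
  have hBfc : Bfᶜ.card = (n+1) - k := by rw [Finset.card_compl, Fintype.card_fin, hBcard]
  have hembE : ∀ i : Fin k, E.orderEmbOfFin hEcard i = FA[(i : ℕ)]'(by omega) :=
    fun i => sorted_orderEmbOfFin hFAs hEcard i
  have hembB : ∀ i : Fin k, Bf.orderEmbOfFin hBcard i = FB[(i : ℕ)]'(by omega) :=
    fun i => sorted_orderEmbOfFin hFBs hBcard i
  have hlt : ∀ i : Fin k, E.orderEmbOfFin hEcard i < Bf.orderEmbOfFin hBcard i := by
    intro i
    rw [hembE i, hembB i, Fin.lt_def, hFAget _ (by omega), hFBget _ (by omega)]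
    have h1 := hcomp i (by omega) (by omega)
    have h2 := hA1' i (by omega)
    omega
  set s := buildPerm E Bf hEcard hBcard hEc hBfc with hs
  -- excedance behaviour
  have hup : ∀ x ∈ E, x < s x := by
    intro x hx
    obtain ⟨i, rfl⟩ := mem_emb hEcard hx
    rw [hs, buildPerm_emb]
    exact hlt i
  have hdown : ∀ x : Fin (n+1), x ∉ E → s x ≤ x := by
    intro x hx
    obtain ⟨j, rfl⟩ := mem_emb hEc (Finset.mem_compl.2 hx)
    rw [hs, buildPerm_embc]
    exact emb_compl_le hEcard hBcard hlt hEc hBfc j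
  have hexS : exS s = E := by
    ext x
    rw [mem_exS]
    constructor
    · intro hlt'
      by_contra hx
      exact absurd hlt' (not_lt.2 (hdown x hx))
    · exact hup x
  have havoid : Avoids321 s := by
    apply avoids_of_incr
    · intro i j hij hi hj
      have hiE : i ∈ E := by
        by_contra hc; exact absurd hi (not_lt.2 (hdown i hc))
      have hjE : j ∈ E := by
        by_contra hc; exact absurd hj (not_lt.2 (hdown j hc))
      obtain ⟨a, rfl⟩ := mem_emb hEcard hiE
      obtain ⟨b, rfl⟩ := mem_emb hEcard hjE
      have hab : a < b := (E.orderEmbOfFin hEcard).strictMono.lt_iff_lt.1 hij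
      rw [hs, buildPerm_emb, buildPerm_emb]
      exact (Bf.orderEmbOfFin hBcard).strictMono hab
    · intro i j hij hi hj
      have hiE : i ∉ E := fun hc => hi (hup i hc)
      have hjE : j ∉ E := fun hc => hj (hup j hc)
      obtain ⟨a, rfl⟩ := mem_emb hEc (Finset.mem_compl.2 hiE)
      obtain ⟨b, rfl⟩ := mem_emb hEc (Finset.mem_compl.2 hjE)
      have hab : a < b := (Eᶜ.orderEmbOfFin hEc).strictMono.lt_iff_lt.1 hij
      rw [hs, buildPerm_embc, buildPerm_embc]
      exact (Bfᶜ.orderEmbOfFin hBfc).strictMono hab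
  have hexList : excedanceList s = FA := by
    rw [excedanceList_eq_sort, hexS, hEdef, sorted_toFinset_sort hFAs]
  refine ⟨s, havoid, ?_⟩
  have hfst : (rightCouple s).1 = (excedanceList s).map (fun i : Fin (n+1) => (i : ℕ) + 1) := by
    rw [rightCouple]
    simp only [List.pure_def, List.bind_eq_flatMap, List.map_flatMap, List.map_cons,
      List.map_nil, ← List.map_eq_flatMap, List.map_map]
    rfl
  have hsnd : (rightCouple s).2
      = (excedanceList s).map (fun i => ((s i : Fin (n+1)) : ℕ) + 1) := rfl
  have h1 : (rightCouple s).1 = A := by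
    rw [hfst, hexList]
    apply List.ext_getElem
    · rw [List.length_map]; omega
    · intro t ht1 ht2
      rw [List.getElem_map]
      have := hFAget t (by omega)
      have := hA1' t (by omega)
      omega
  have h2 : (rightCouple s).2 = Bl := by
    rw [hsnd, hexList]
    apply List.ext_getElem
    · rw [List.length_map]; omega
    · intro t ht1 ht2
      rw [List.getElem_map]
      have hsval : s (FA[t]'(by omega)) = FB[t]'(by omega) := by
        have h := hembE ⟨t, by omega⟩
        rw [← h, hs, buildPerm_emb, hembB ⟨t, by omega⟩]
      rw [hsval]
      have := hFBget t (by omega)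
      have h3 := hcomp t (by omega) (by omega)
      have := hA1' t (by omega)
      omega
  exact Prod.ext h1 h2
end Stmt9Aux

theorem stmt9 (n : ℕ) :
    Set.BijOn rightCouple {s : Equiv.Perm (Fin (n + 1)) | Avoids321 s} (IIn n) := by
  refine ⟨fun s hs => Stmt9Aux.mapsTo s hs,
    fun s hs t ht h => Stmt9Aux.injOn_aux hs ht h, ?_⟩
  intro p hp
  obtain ⟨s, hav, heq⟩ := Stmt9Aux.surj_aux p hp
  exact ⟨s, hav, heq⟩
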